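/- arXiv:0801.0353 — 2 statements merged into one kernel-verified Lean document; each statement's English description precedes it below -/
import Mathlib

section
/- A partial function F : {0,1}* → ℕ is of the form max f for some total recursive f : {0,1}* × ℕ → ℕ if and only if F is of the form p ↦ card(W_{g(p)}) for some total recursive g : {0,1}* → {0,1}*, where card(W) is defined only when W is finite. -/
/-- The max of a set of naturals, as a partial value: defined iff the set is
nonempty and bounded. -/
noncomputable def pmax (S : Set ℕ) : Part ℕ := ⟨S.Nonempty ∧ BddAbove S, fun _ => sSup S⟩

/-- The cardinality of a set of naturals, as a partial value: defined iff the set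
is finite. -/
noncomputable def pcard (S : Set ℕ) : Part ℕ := ⟨S.Finite, fun _ => S.ncard⟩

open Nat.Partrec Nat.Partrec.Code

lemma length_filterMap_eq (f : ℕ → Option ℕ) (l : List ℕ) :
    (l.filterMap f).length = (l.filter fun n => (f n).isSome).length := by
  induction l with
  | nil => rfl
  | cons a l ih => cases h : f a <;> simp [List.filterMap_cons, List.filter_cons, h, ih]

/-- Bridge: the partial max of the range of a total function equals the partial
cardinality of the downward-closed set of naturals strictly below some value. -/
lemma pmax_eq_pcard (u : ℕ → ℕ) : pmax (Set.range u) = pcard {n | ∃ t, n < u t} := by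
  have hne : (Set.range u).Nonempty := ⟨u 0, 0, rfl⟩
  apply Part.ext'
  · simp only [pmax, pcard]
    constructor
    · rintro ⟨-, b, hb⟩
      refine (Set.finite_Iio b).subset ?_
      rintro n ⟨t, ht⟩
      exact lt_of_lt_of_le ht (hb ⟨t, rfl⟩)
    · intro hfin
      refine ⟨hne, ?_⟩
      by_contra h
      rw [not_bddAbove_iff] at h
      have : {n | ∃ t, n < u t} = Set.univ := by
        ext N
        obtain ⟨y, ⟨t, rfl⟩, hy⟩ := h N
        exact ⟨fun _ => trivial, fun _ => ⟨t, hy⟩⟩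
      rw [this] at hfin
      exact Set.infinite_univ hfin
  · intro h1 h2
    simp only [pmax, pcard]
    obtain ⟨hne', hbdd⟩ := h1
    obtain ⟨t0, ht0⟩ := Nat.sSup_mem hne' hbdd
    have hset : {n | ∃ t, n < u t} = Set.Iio (sSup (Set.range u)) := by
      ext n
      constructor
      · rintro ⟨t, ht⟩
        exact lt_of_lt_of_le ht (le_csSup hbdd ⟨t, rfl⟩)
      · intro hn
        exact ⟨t0, by rwa [ht0]⟩
    rw [hset, ← Finset.coe_range, Set.ncard_coe_finset, Finset.card_range]

/-- number of inputs `< t` on which code `c` halts within `t` steps -/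
def cnt (c : Nat.Partrec.Code) (t : ℕ) : ℕ :=
  ((List.range t).filter fun n => (evaln t c n).isSome).length

lemma cnt_le (c : Nat.Partrec.Code) (hfin : c.eval.Dom.Finite) (t : ℕ) :
    cnt c t ≤ c.eval.Dom.ncard := by
  classical
  set l := (List.range t).filter fun n => (evaln t c n).isSome with hl
  have hnd : l.Nodup := (List.nodup_range (n := t)).filter _
  have hsub : ↑l.toFinset ⊆ c.eval.Dom := by
    intro n hn
    simp only [Finset.coe_sort_coe, List.coe_toFinset, Set.mem_setOf_eq] at hn
    have := (List.mem_filter.1 hn).2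
    obtain ⟨x, hx⟩ := Option.isSome_iff_exists.1 (by simpa using this)
    exact Part.dom_iff_mem.2 ⟨x, evaln_sound hx⟩
  calc cnt c t = l.toFinset.card := (List.toFinset_card_of_nodup hnd).symm
    _ = (↑l.toFinset : Set ℕ).ncard := (Set.ncard_coe_finset _).symm
    _ ≤ _ := Set.ncard_le_ncard hsub hfin

lemma cnt_ge (c : Nat.Partrec.Code) (S : Finset ℕ) (hS : ↑S ⊆ c.eval.Dom) :
    ∃ t, S.card ≤ cnt c t := by
  classical
  set B := S.sup (fun n => n + 1 +
    (if h : ∃ k, (evaln k c n).isSome then Nat.find h else 0)) with hB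
  have key : ∀ n ∈ S, n < B ∧ (evaln B c n).isSome := by
    intro n hn
    have hd : (c.eval n).Dom := hS hn
    obtain ⟨x, hx⟩ := Part.dom_iff_mem.1 hd
    obtain ⟨k, hk⟩ := evaln_complete.1 hx
    have hex : ∃ k, (evaln k c n).isSome := ⟨k, Option.isSome_iff_exists.2 ⟨x, hk⟩⟩
    have hle : n + 1 + Nat.find hex ≤ B := by
      have := Finset.le_sup (f := fun n => n + 1 +
        (if h : ∃ k, (evaln k c n).isSome then Nat.find h else 0)) hn
      simp only [dif_pos hex] at this
      exact this
    obtain ⟨y, hy⟩ := Option.isSome_iff_exists.1 (Nat.find_spec hex)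
    refine ⟨by omega, Option.isSome_iff_exists.2 ⟨y, evaln_mono (by omega) hy⟩⟩
  refine ⟨B, ?_⟩
  set l := (List.range B).filter fun n => (evaln B c n).isSome with hl
  have hnd : l.Nodup := (List.nodup_range (n := B)).filter _
  have hsub : S ⊆ l.toFinset := by
    intro n hn
    obtain ⟨h1, h2⟩ := key n hn
    simp only [List.mem_toFinset, hl, List.mem_filter, List.mem_range]
    exact ⟨h1, by simpa using h2⟩
  calc S.card ≤ l.toFinset.card := Finset.card_le_card hsub
    _ = l.length := List.toFinset_card_of_nodup hnd
    _ = cnt c B := rfl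

lemma pcard_eq_pmax (c : Nat.Partrec.Code) :
    pcard c.eval.Dom = pmax (Set.range fun t => cnt c t) := by
  have hne : (Set.range fun t => cnt c t).Nonempty := ⟨cnt c 0, 0, rfl⟩
  apply Part.ext'
  · simp only [pmax, pcard]
    constructor
    · intro hfin
      refine ⟨hne, ⟨c.eval.Dom.ncard, ?_⟩⟩
      rintro x ⟨t, rfl⟩
      exact cnt_le c hfin t
    · rintro ⟨-, b, hb⟩
      by_contra hinf
      obtain ⟨S, hSsub, hScard⟩ :=
        (Set.Infinite.exists_subset_card_eq hinf (b + 1))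
      obtain ⟨t, ht⟩ := cnt_ge c S hSsub
      have : cnt c t ≤ b := hb ⟨t, rfl⟩
      omega
  · intro h1 h2
    simp only [pmax, pcard]
    obtain ⟨-, hbdd⟩ := h2
    change c.eval.Dom.Finite at h1
    refine le_antisymm ?_ (csSup_le hne ?_)
    · obtain ⟨t, ht⟩ := cnt_ge c h1.toFinset (by simp)
      rw [Set.ncard_eq_toFinset_card _ h1]
      exact le_trans ht (le_csSup hbdd ⟨t, rfl⟩)
    · rintro x ⟨t, rfl⟩
      exact cnt_le c h1 t

theorem stmt11 (F : List Bool →. ℕ) :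
    (∃ f : List Bool × ℕ → ℕ, Computable f ∧
        ∀ p, F p = pmax (Set.range fun t => f (p, t))) ↔
    (∃ g : List Bool → Nat.Partrec.Code, Computable g ∧
        ∀ p, F p = pcard ((g p).eval.Dom)) := by
  constructor
  · rintro ⟨f, hf, hF⟩
    -- the Bool-valued test function
    set u : ℕ × ℕ → Bool := fun a =>
      decide (a.1.unpair.2 < f (((Encodable.decode a.1.unpair.1 : Option (List Bool)).getD []), a.2))
      with hu
    have hucomp : Computable u := by
      have h1 : Computable fun a : ℕ × ℕ => a.1.unpair.2 :=
        (Computable.snd.comp (Computable.unpair.comp Computable.fst))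
      have h2 : Computable fun a : ℕ × ℕ =>
          f (((Encodable.decode a.1.unpair.1 : Option (List Bool)).getD []), a.2) :=
        hf.comp ((Computable.option_getD
          (Computable.decode.comp (Computable.fst.comp (Computable.unpair.comp Computable.fst)))
          (Computable.const [])).pair Computable.snd)
      exact Primrec.nat_lt.decide.to_comp.comp h1 h2
    set hpart : ℕ →. ℕ := fun m => Nat.rfind fun t => Part.some (u (m, t)) with hhp
    have hpr : Partrec hpart := Partrec.rfind (hucomp.to₂.partrec₂)
    obtain ⟨c, hc⟩ := exists_code.1 (Partrec.nat_iff.1 hpr)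
    refine ⟨fun p => c.curry (Encodable.encode p),
      (primrec₂_curry.comp (Primrec.const c) Primrec.encode).to_comp, fun p => ?_⟩
    have hdom : (c.curry (Encodable.encode p)).eval.Dom = {n | ∃ t, n < f (p, t)} := by
      ext n
      show ((c.curry (Encodable.encode p)).eval n).Dom ↔ _
      rw [eval_curry, hc]
      show (Nat.rfind _).Dom ↔ _
      refine Nat.rfind_dom.trans ?_
      simp [hu, Nat.unpair_pair, Encodable.encodek]
    rw [hF p, hdom, pmax_eq_pcard]
  · rintro ⟨g, hg, hF⟩
    refine ⟨fun a => ((List.range a.2).filterMap fun n => evaln a.2 (g a.1) n).length, ?_, fun p => ?_⟩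
    · have hq : Primrec₂ fun (x : Nat.Partrec.Code × ℕ) (n : ℕ) => evaln x.2 x.1 n := by
        have : Primrec fun y : (Nat.Partrec.Code × ℕ) × ℕ => evaln y.1.2 y.1.1 y.2 :=
          primrec_evaln.comp
            ((((Primrec.snd.comp Primrec.fst).pair (Primrec.fst.comp Primrec.fst)).pair
              Primrec.snd))
        exact this
      have hP : Primrec fun x : Nat.Partrec.Code × ℕ =>
          ((List.range x.2).filterMap fun n => evaln x.2 x.1 n).length :=
        Primrec.list_length.comp
          (Primrec.listFilterMap (Primrec.list_range.comp Primrec.snd) hq)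
      exact hP.to_comp.comp ((hg.comp Computable.fst).pair Computable.snd)
    · rw [hF p, pcard_eq_pmax]
      have he : (fun t => ((List.range t).filterMap fun n => evaln t (g p) n).length)
          = fun t => cnt (g p) t := funext fun t => length_filterMap_eq _ _
      rw [he]
end

section
/- Let R ⊆ Fin(X→X) × X × X be a functional relation on an infinite set X and Φ_R the associated continuous functional. Then Φ_R equals the n-th iteration functional It^(n) if and only if: (a) for every finite partial function α and every x such that α^(n)(x) is defined, the triple (α restricted to {α^(i)(x) : 0 ≤ i < n}, x, α^(n)(x)) belongs to R; and (b) for every (α, x, y) ∈ R, α^(n)(x) is defined and equals y. -/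
/-- Iteration of a partial function: f^(0) = id, f^(n+1) = f^(n) ∘ f. -/
def pIter {X : Type*} (f : X →. X) : ℕ → (X →. X)
  | 0 => fun x => Part.some x
  | n + 1 => fun x => (f x).bind (pIter f n)

/-- `g` extends `f` (graph inclusion of partial functions). -/
def pext {X : Type*} (f g : X →. X) : Prop := ∀ x y, y ∈ f x → y ∈ g x

/-- Two partial functions are compatible: their union is still a partial function. -/
def PCompatible {X : Type*} (f g : X →. X) : Prop := ∃ h : X →. X, pext f h ∧ pext g h

/-- `R` is a functional relation. -/
def FunctionalRel {X : Type*} (R : (X →. X) → X → X → Prop) : Prop :=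
  ∀ α β x y y', PCompatible α β → R α x y → R β x y' → y = y'

/-- The restriction of a partial function to a set. -/
def restr {X : Type*} (f : X →. X) (s : Set X) : X →. X :=
  fun x => ⟨x ∈ s ∧ (f x).Dom, fun h => (f x).get h.2⟩

lemma mem_restr {X : Type*} (f : X →. X) (s : Set X) (x y : X) :
    y ∈ restr f s x ↔ x ∈ s ∧ y ∈ f x := by
  constructor
  · rintro ⟨⟨hs, hd⟩, rfl⟩
    exact ⟨hs, ⟨hd, rfl⟩⟩
  · rintro ⟨hs, hd, rfl⟩
    exact ⟨⟨hs, hd⟩, rfl⟩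

lemma pIter_add {X : Type*} (f : X →. X) (a b : ℕ) (x : X) :
    pIter f (a + b) x = (pIter f a x).bind (pIter f b) := by
  induction a generalizing x with
  | zero => simp only [Nat.zero_add]; exact (Part.bind_some x (pIter f b)).symm
  | succ a ih =>
    rw [show a + 1 + b = (a + b) + 1 from by omega]
    simp only [pIter]
    refine Eq.trans ?_ (Part.bind_assoc (f x) (pIter f a) (pIter f b)).symm
    congr 1
    funext u
    exact ih u

lemma pIter_agree {X : Type*} (f g : X →. X) :
    ∀ (i : ℕ) (x : X), (∀ k < i, ∀ u, u ∈ pIter f k x → ∀ v, v ∈ f u → v ∈ g u) →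
    ∀ y, y ∈ pIter f i x → y ∈ pIter g i x := by
  intro i
  induction i with
  | zero => intro x _ y hy; exact hy
  | succ i ih =>
    intro x h y hy
    simp only [pIter] at hy ⊢
    obtain ⟨v, hv, hy⟩ := Part.mem_bind_iff.1 hy
    refine Part.mem_bind_iff.2 ⟨v, h 0 (Nat.succ_pos i) x (Part.mem_some x) v hv, ?_⟩
    exact ih v (fun k hk u hu => h (k+1) (Nat.succ_lt_succ hk) u
      (Part.mem_bind_iff.2 ⟨v, hv, hu⟩)) y hy

lemma pIter_mono {X : Type*} {f g : X →. X} (h : pext f g) (i : ℕ) (x y : X)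
    (hy : y ∈ pIter f i x) : y ∈ pIter g i x :=
  pIter_agree f g i x (fun _ _ u _ v hv => h u v hv) y hy

lemma orbit_finite {X : Type*} (f : X →. X) (n : ℕ) (x : X) :
    {z | ∃ i < n, z ∈ pIter f i x}.Finite := by
  have hsub : {z | ∃ i < n, z ∈ pIter f i x} ⊆ ⋃ i ∈ Finset.range n, {z | z ∈ pIter f i x} := by
    rintro z ⟨i, hi, hz⟩
    exact Set.mem_biUnion (Finset.mem_range.2 hi) hz
  refine Set.Finite.subset (Set.Finite.biUnion (Finset.range n).finite_toSet
    (fun i _ => ?_)) hsub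
  exact Set.Subsingleton.finite (s := {z | z ∈ pIter f i x})
    (fun a ha b hb => Part.mem_unique ha hb)

theorem stmt15 {X : Type*} [Infinite X] (R : (X →. X) → X → X → Prop)
    (hdom : ∀ α x y, R α x y → α.Dom.Finite) (hfun : FunctionalRel R) (n : ℕ) :
    (∀ f : X →. X, ∀ x y, (∃ α, pext α f ∧ R α x y) ↔ y ∈ pIter f n x) ↔
    ((∀ α : X →. X, α.Dom.Finite → ∀ x y, y ∈ pIter α n x →
        R (restr α {z | ∃ i < n, z ∈ pIter α i x}) x y) ∧
     (∀ α x y, R α x y → y ∈ pIter α n x)) := by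
  constructor
  · intro H
    refine ⟨?_, fun α x y hR => (H α x y).1 ⟨α, fun u v h => h, hR⟩⟩
    intro α hα x y hy
    classical
    set S := {z | ∃ i < n, z ∈ pIter α i x} with hSdef
    set f := restr α S with hfdef
    have hyf : y ∈ pIter f n x :=
      pIter_agree α f n x
        (fun k hk u hu v hv => (mem_restr α S u v).2 ⟨⟨k, hk, hu⟩, hv⟩) y hy
    obtain ⟨β, hβf, hβR⟩ := (H f x y).2 hyf
    have key : ∀ w v, v ∈ f w → v ∈ β w := by
      intro w v hv
      by_contra hvn
      have hβw : ∀ v', v' ∉ β w := by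
        intro v' hv'
        have he : v' = v := Part.mem_unique (hβf w v' hv') hv
        exact hvn (he ▸ hv')
      obtain ⟨hwS, hvα⟩ := (mem_restr α S w v).1 hv
      have hex : ∃ i, i < n ∧ w ∈ pIter α i x := by
        obtain ⟨i, h1, h2⟩ := hwS; exact ⟨i, h1, h2⟩
      set i := Nat.find hex with hidef
      obtain ⟨hin, hwi⟩ := Nat.find_spec hex
      obtain ⟨z, hz⟩ := ((orbit_finite α n x).union (Set.finite_singleton y)).infinite_compl.nonempty
      have hzS : z ∉ S := fun h => hz (Or.inl h)
      have hzy : z ≠ y := fun h => hz (Or.inr h)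
      have hzw : z ≠ w := fun h => hzS (h.symm ▸ hwS)
      set g : X →. X := fun u => if u = w then Part.some z else f u with hgdef
      have hβg : pext β g := by
        intro u v' hv'
        by_cases hu : u = w
        · exact absurd (hu ▸ hv') (hβw v')
        · simpa [hgdef, hu] using hβf u v' hv'
      have hyg : y ∈ pIter g n x := (H g x y).1 ⟨β, hβg, hβR⟩
      have hwg : w ∈ pIter g i x := by
        refine pIter_agree α g i x ?_ w hwi
        intro k hk u hu v' hv'
        have huw : u ≠ w := by
          intro h
          exact Nat.find_min hex hk ⟨lt_trans hk hin, h ▸ hu⟩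
        have hvf : v' ∈ f u := (mem_restr α S u v').2 ⟨⟨k, lt_trans hk hin, hu⟩, hv'⟩
        simpa [hgdef, huw] using hvf
      have hyg' : y ∈ (pIter g i x).bind (pIter g (n - i)) := by
        rw [← pIter_add, show i + (n - i) = n from by omega]
        exact hyg
      obtain ⟨u, hu, hyu⟩ := Part.mem_bind_iff.1 hyg'
      have huw : u = w := Part.mem_unique hu hwg
      subst huw
      obtain ⟨m, hm⟩ : ∃ m, n - i = m + 1 := ⟨n - i - 1, by omega⟩
      rw [hm] at hyu
      simp only [pIter] at hyu
      obtain ⟨v', hv', hyv⟩ := Part.mem_bind_iff.1 hyu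
      have hvz : v' = z := Part.mem_unique hv' (by simp [hgdef])
      rw [hvz] at hyv
      cases m with
      | zero =>
        exact (hzy (Part.mem_unique (Part.mem_some z) hyv)).elim
      | succ m =>
        simp only [pIter] at hyv
        obtain ⟨v'', hv'', _⟩ := Part.mem_bind_iff.1 hyv
        have : v'' ∈ f z := by simpa [hgdef, hzw] using hv''
        exact hzS ((mem_restr α S z v'').1 this).1
    have hfβ : f = β := by
      funext u
      apply Part.ext
      intro v
      exact ⟨fun h => key u v h, fun h => hβf u v h⟩
    rw [show R (restr α S) x y = R f x y from rfl, hfβ]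
    exact hβR
  · rintro ⟨ha, hb⟩ f x y
    constructor
    · rintro ⟨β, hβf, hβR⟩
      exact pIter_mono hβf n x y (hb β x y hβR)
    · intro hy
      set S := {z | ∃ i < n, z ∈ pIter f i x} with hSdef
      have hfin : (restr f S).Dom.Finite :=
        (orbit_finite f n x).subset (fun u hu => hu.1)
      have hyα : y ∈ pIter (restr f S) n x :=
        pIter_agree f (restr f S) n x
          (fun k hk u hu v hv => (mem_restr f S u v).2 ⟨⟨k, hk, hu⟩, hv⟩) y hy
      refine ⟨_, ?_, ha (restr f S) hfin x y hyα⟩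
      intro u v hv
      exact ((mem_restr f S u v).1 ((mem_restr (restr f S) _ u v).1 hv).2).2
end
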